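/- arXiv:2112.03026 — 2 statements merged into one kernel-verified Lean document; each statement's English description precedes it below -/
import Mathlib

section
/- The order ≤_HZX is an admissible order on IVIFNs: it is a total order, and for any two IVIFNs α, β, if μL_α ≤ μL_β, μR_α ≤ μR_β, νL_α ≥ νL_β, and νR_α ≥ νR_β, then α ≤_HZX β. -/
structure IVIFN where
  muL : ℝ
  muR : ℝ
  nuL : ℝ
  nuR : ℝ
  muL_nonneg : 0 ≤ muL
  mu_le : muL ≤ muR
  muR_le_one : muR ≤ 1
  nuL_nonneg : 0 ≤ nuL
  nu_le : nuL ≤ nuR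
  nuR_le_one : nuR ≤ 1
  sum_le_one : muR + nuR ≤ 1

noncomputable def Sf (a : IVIFN) : ℝ := (a.muL + a.muR) / 2 - (a.nuL + a.nuR) / 2
noncomputable def Hf (a : IVIFN) : ℝ := (a.muL + a.muR) / 2 + (a.nuL + a.nuR) / 2
noncomputable def E2 (a : IVIFN) : ℝ := (a.muR - a.muL + a.nuR - a.nuL) / 2
noncomputable def E3 (a : IVIFN) : ℝ := a.muR - a.muL

def ltHZX (a b : IVIFN) : Prop :=
  Sf a < Sf b ∨ (Sf a = Sf b ∧ (Hf a < Hf b ∨ (Hf a = Hf b ∧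
    (E2 a < E2 b ∨ (E2 a = E2 b ∧ E3 a < E3 b)))))

def leHZX (a b : IVIFN) : Prop := a = b ∨ ltHZX a b

lemma IVIFN.ext4 (a b : IVIFN) (h1 : Sf a = Sf b) (h2 : Hf a = Hf b)
    (h3 : E2 a = E2 b) (h4 : E3 a = E3 b) : a = b := by
  cases a; cases b
  simp only [Sf, Hf, E2, E3] at h1 h2 h3 h4
  simp only [IVIFN.mk.injEq]
  refine ⟨by linarith, by linarith, by linarith, by linarith⟩

lemma ltHZX_asymm (a b : IVIFN) (h1 : ltHZX a b) (h2 : ltHZX b a) : False := by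
  rcases h1 with h|⟨e1,h|⟨e2,h|⟨e3,h⟩⟩⟩ <;>
    rcases h2 with g|⟨f1,g|⟨f2,g|⟨f3,g⟩⟩⟩ <;> linarith

lemma ltHZX_trans (a b c : IVIFN) (h1 : ltHZX a b) (h2 : ltHZX b c) : ltHZX a c := by
  rcases h1 with h|⟨e1,h|⟨e2,h|⟨e3,h⟩⟩⟩ <;>
    rcases h2 with g|⟨f1,g|⟨f2,g|⟨f3,g⟩⟩⟩ <;>
  first
    | exact Or.inl (by linarith)
    | exact Or.inr ⟨by linarith, Or.inl (by linarith)⟩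
    | exact Or.inr ⟨by linarith, Or.inr ⟨by linarith, Or.inl (by linarith)⟩⟩
    | exact Or.inr ⟨by linarith, Or.inr ⟨by linarith, Or.inr ⟨by linarith, by linarith⟩⟩⟩

lemma ltHZX_total (a b : IVIFN) : ltHZX a b ∨ a = b ∨ ltHZX b a := by
  rcases lt_trichotomy (Sf a) (Sf b) with h1|h1|h1
  · exact Or.inl (Or.inl h1)
  · rcases lt_trichotomy (Hf a) (Hf b) with h2|h2|h2
    · exact Or.inl (Or.inr ⟨h1, Or.inl h2⟩)
    · rcases lt_trichotomy (E2 a) (E2 b) with h3|h3|h3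
      · exact Or.inl (Or.inr ⟨h1, Or.inr ⟨h2, Or.inl h3⟩⟩)
      · rcases lt_trichotomy (E3 a) (E3 b) with h4|h4|h4
        · exact Or.inl (Or.inr ⟨h1, Or.inr ⟨h2, Or.inr ⟨h3, h4⟩⟩⟩)
        · exact Or.inr (Or.inl (IVIFN.ext4 a b h1 h2 h3 h4))
        · exact Or.inr (Or.inr (Or.inr ⟨h1.symm, Or.inr ⟨h2.symm, Or.inr ⟨h3.symm, h4⟩⟩⟩))
      · exact Or.inr (Or.inr (Or.inr ⟨h1.symm, Or.inr ⟨h2.symm, Or.inl h3⟩⟩))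
    · exact Or.inr (Or.inr (Or.inr ⟨h1.symm, Or.inl h2⟩))
  · exact Or.inr (Or.inr (Or.inl h1))

theorem leHZX_admissible :
    (∀ a b : IVIFN, leHZX a b ∨ leHZX b a) ∧
    (∀ a : IVIFN, leHZX a a) ∧
    (∀ a b : IVIFN, leHZX a b → leHZX b a → a = b) ∧
    (∀ a b c : IVIFN, leHZX a b → leHZX b c → leHZX a c) ∧
    (∀ a b : IVIFN, a.muL ≤ b.muL → a.muR ≤ b.muR → a.nuL ≥ b.nuL → a.nuR ≥ b.nuR →
      leHZX a b) := by
  refine ⟨?_, ?_, ?_, ?_, ?_⟩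
  · intro a b
    rcases ltHZX_total a b with h|h|h
    · exact Or.inl (Or.inr h)
    · exact Or.inl (Or.inl h)
    · exact Or.inr (Or.inr h)
  · intro a; exact Or.inl rfl
  · intro a b hab hba
    rcases hab with h|h
    · exact h
    · rcases hba with g|g
      · exact g.symm
      · exact absurd g (fun g => ltHZX_asymm a b h g)
  · intro a b c hab hbc
    rcases hab with h|h
    · rw [h]; exact hbc
    · rcases hbc with g|g
      · rw [← g]; exact Or.inr h
      · exact Or.inr (ltHZX_trans a b c h g)
  · intro a b h1 h2 h3 h4
    rcases lt_or_eq_of_le (show Sf a ≤ Sf b by unfold Sf; linarith) with h|h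
    · exact Or.inr (Or.inl h)
    · -- Sf equal forces all components equal
      have hS : (a.muL + a.muR) / 2 - (a.nuL + a.nuR) / 2
          = (b.muL + b.muR) / 2 - (b.nuL + b.nuR) / 2 := h
      have e1 : a.muL = b.muL := by linarith
      have e2 : a.muR = b.muR := by linarith
      have e3 : a.nuL = b.nuL := by linarith
      have e4 : a.nuR = b.nuR := by linarith
      left
      cases a; cases b
      simp_all
end

section
/- The set of all IVIFNs equipped with the order ≤_WLW is a complete chain, where ≤_WLW is the lexicographic order on (S, H, T, G) with T(α) = (μR−μL) − (νR−νL) the membership uncertainty index and G(α) = (μR−μL) + (νR−νL) the hesitation uncertainty index. -/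
noncomputable def Tf (a : IVIFN) : ℝ := (a.muR - a.muL) - (a.nuR - a.nuL)
noncomputable def Gf (a : IVIFN) : ℝ := (a.muR - a.muL) + (a.nuR - a.nuL)

def ltWLW (a b : IVIFN) : Prop :=
  Sf a < Sf b ∨ (Sf a = Sf b ∧ (Hf a < Hf b ∨ (Hf a = Hf b ∧
    (Tf a < Tf b ∨ (Tf a = Tf b ∧ Gf a < Gf b)))))

def leWLW (a b : IVIFN) : Prop := a = b ∨ ltWLW a b

-- auxiliary lemmas
lemma IVIFN.ext' {a b : IVIFN} (h1 : a.muL = b.muL) (h2 : a.muR = b.muR)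
    (h3 : a.nuL = b.nuL) (h4 : a.nuR = b.nuR) : a = b := by
  cases a; cases b; simp_all

lemma ext4 {a b : IVIFN} (hs : Sf a = Sf b) (hh : Hf a = Hf b)
    (ht : Tf a = Tf b) (hg : Gf a = Gf b) : a = b := by
  simp only [Sf, Hf, Tf, Gf] at hs hh ht hg
  exact IVIFN.ext' (by linarith) (by linarith) (by linarith) (by linarith)

section Cons
variable (a : IVIFN)

lemma S_le_one : Sf a ≤ 1 := by
  simp only [Sf]; linarith [a.muL_nonneg, a.mu_le, a.nuL_nonneg, a.nu_le, a.sum_le_one, a.muR_le_one]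
lemma neg_one_le_S : -1 ≤ Sf a := by
  simp only [Sf]; linarith [a.muL_nonneg, a.mu_le, a.nuL_nonneg, a.nu_le, a.nuR_le_one]
lemma H_le_one : Hf a ≤ 1 := by
  simp only [Hf]; linarith [a.muL_nonneg, a.mu_le, a.nuL_nonneg, a.nu_le, a.sum_le_one]
lemma S_le_H : Sf a ≤ Hf a := by
  simp only [Sf, Hf]; linarith [a.nuL_nonneg, a.nu_le]
lemma negS_le_H : -Sf a ≤ Hf a := by
  simp only [Sf, Hf]; linarith [a.muL_nonneg, a.mu_le]
lemma T_le_G : Tf a ≤ Gf a := by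
  simp only [Tf, Gf]; linarith [a.nu_le]
lemma negT_le_G : -Tf a ≤ Gf a := by
  simp only [Tf, Gf]; linarith [a.mu_le]
lemma TG_le : Tf a + Gf a ≤ 2*(Sf a + Hf a) := by
  simp only [Sf, Hf, Tf, Gf]; linarith [a.muL_nonneg]
lemma GT_le : Gf a - Tf a ≤ 2*(Hf a - Sf a) := by
  simp only [Sf, Hf, Tf, Gf]; linarith [a.nuL_nonneg]
lemma HG_le : 2*Hf a + Gf a ≤ 2 := by
  simp only [Hf, Gf]; linarith [a.sum_le_one]
lemma T_le_SH : Tf a ≤ Sf a + Hf a := by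
  simp only [Sf, Hf, Tf]; linarith [a.muL_nonneg, a.nu_le]
lemma SH_le_T : Sf a - Hf a ≤ Tf a := by
  simp only [Sf, Hf, Tf]; linarith [a.nuL_nonneg, a.mu_le]
lemma T_le_2H : Tf a ≤ 2 - 2*Hf a := by
  simp only [Hf, Tf]; linarith [a.sum_le_one, a.nu_le]
lemma negT_le_2H : -Tf a ≤ 2 - 2*Hf a := by
  simp only [Hf, Tf]; linarith [a.sum_le_one, a.nuL_nonneg, a.muL_nonneg, a.nu_le, a.mu_le, a.nuR_le_one]
lemma G_le_two : Gf a ≤ 2 := by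
  simp only [Gf]; linarith [a.muL_nonneg, a.nuL_nonneg, a.muR_le_one, a.nuR_le_one]
lemma T_le_two : Tf a ≤ 2 := by
  simp only [Tf]; linarith [a.muL_nonneg, a.nuL_nonneg, a.muR_le_one, a.nu_le]
end Cons
noncomputable def mk4 (s h t g : ℝ) (h1 : t ≤ g) (h2 : -t ≤ g)
    (h3 : t + g ≤ 2*(s+h)) (h4 : g - t ≤ 2*(h-s)) (h5 : 2*h + g ≤ 2) : IVIFN where
  muL := (2*(s+h) - (t+g))/4
  muR := (2*(s+h) + (t+g))/4
  nuL := (2*(h-s) - (g-t))/4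
  nuR := (2*(h-s) + (g-t))/4
  muL_nonneg := by linarith
  mu_le := by linarith
  muR_le_one := by linarith
  nuL_nonneg := by linarith
  nu_le := by linarith
  nuR_le_one := by linarith
  sum_le_one := by linarith

variable {s h t g : ℝ} {h1 : t ≤ g} {h2 : -t ≤ g} {h3 : t + g ≤ 2*(s+h)}
  {h4 : g - t ≤ 2*(h-s)} {h5 : 2*h + g ≤ 2}

@[simp] lemma mk4_S : Sf (mk4 s h t g h1 h2 h3 h4 h5) = s := by
  simp only [Sf, mk4]; ring
@[simp] lemma mk4_H : Hf (mk4 s h t g h1 h2 h3 h4 h5) = h := by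
  simp only [Hf, mk4]; ring
@[simp] lemma mk4_T : Tf (mk4 s h t g h1 h2 h3 h4 h5) = t := by
  simp only [Tf, mk4]; ring
@[simp] lemma mk4_G : Gf (mk4 s h t g h1 h2 h3 h4 h5) = g := by
  simp only [Gf, mk4]; ring

-- lex helpers
lemma lt1 {a b : IVIFN} (h : Sf a < Sf b) : ltWLW a b := Or.inl h
lemma lt2 {a b : IVIFN} (e : Sf a = Sf b) (h : Hf a < Hf b) : ltWLW a b := Or.inr ⟨e, Or.inl h⟩
lemma lt3 {a b : IVIFN} (e : Sf a = Sf b) (e2 : Hf a = Hf b) (h : Tf a < Tf b) : ltWLW a b :=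
  Or.inr ⟨e, Or.inr ⟨e2, Or.inl h⟩⟩
lemma lt4 {a b : IVIFN} (e : Sf a = Sf b) (e2 : Hf a = Hf b) (e3 : Tf a = Tf b) (h : Gf a < Gf b) :
    ltWLW a b := Or.inr ⟨e, Or.inr ⟨e2, Or.inr ⟨e3, h⟩⟩⟩

lemma le_S {a b : IVIFN} (h : leWLW a b) : Sf a ≤ Sf b := by
  obtain rfl | (h | ⟨e, _⟩) := h
  · exact le_rfl
  · exact le_of_lt h
  · exact le_of_eq e
lemma le_H {a b : IVIFN} (h : leWLW a b) (e : Sf a = Sf b) : Hf a ≤ Hf b := by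
  obtain rfl | (h | ⟨e1, h | ⟨e2, _⟩⟩) := h
  · exact le_rfl
  · exact absurd e (ne_of_lt h)
  · exact le_of_lt h
  · exact le_of_eq e2
lemma le_T {a b : IVIFN} (h : leWLW a b) (e : Sf a = Sf b) (e2 : Hf a = Hf b) : Tf a ≤ Tf b := by
  obtain rfl | (h | ⟨e1, h | ⟨f1, h | ⟨f2, _⟩⟩⟩) := h
  · exact le_rfl
  · exact absurd e (ne_of_lt h)
  · exact absurd e2 (ne_of_lt h)
  · exact le_of_lt h
  · exact le_of_eq f2
lemma le_G {a b : IVIFN} (h : leWLW a b) (e : Sf a = Sf b) (e2 : Hf a = Hf b)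
    (e3 : Tf a = Tf b) : Gf a ≤ Gf b := by
  obtain rfl | (h | ⟨e1, h | ⟨f1, h | ⟨f2, h⟩⟩⟩) := h
  · exact le_rfl
  · exact absurd e (ne_of_lt h)
  · exact absurd e2 (ne_of_lt h)
  · exact absurd e3 (ne_of_lt h)
  · exact le_of_lt h

lemma ltWLW_trans {a b c : IVIFN} (hab : ltWLW a b) (hbc : ltWLW b c) : ltWLW a c := by
  obtain h1 | ⟨e1, h1 | ⟨f1, h1 | ⟨g1, h1⟩⟩⟩ := hab <;>
    obtain h2 | ⟨e2, h2 | ⟨f2, h2 | ⟨g2, h2⟩⟩⟩ := hbc <;>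
    first
      | exact Or.inl (by linarith)
      | exact Or.inr ⟨by linarith, Or.inl (by linarith)⟩
      | exact Or.inr ⟨by linarith, Or.inr ⟨by linarith, Or.inl (by linarith)⟩⟩
      | exact Or.inr ⟨by linarith, Or.inr ⟨by linarith, Or.inr ⟨by linarith, by linarith⟩⟩⟩

lemma leWLW_trans {a b c : IVIFN} (hab : leWLW a b) (hbc : leWLW b c) : leWLW a c := by
  obtain rfl | h1 := hab
  · exact hbc
  · obtain rfl | h2 := hbc
    · exact Or.inr h1
    · exact Or.inr (ltWLW_trans h1 h2)

lemma leWLW_total (a b : IVIFN) : leWLW a b ∨ leWLW b a := by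
  rcases lt_trichotomy (Sf a) (Sf b) with h | e1 | h
  · exact Or.inl (Or.inr (lt1 h))
  · rcases lt_trichotomy (Hf a) (Hf b) with h | e2 | h
    · exact Or.inl (Or.inr (lt2 e1 h))
    · rcases lt_trichotomy (Tf a) (Tf b) with h | e3 | h
      · exact Or.inl (Or.inr (lt3 e1 e2 h))
      · rcases lt_trichotomy (Gf a) (Gf b) with h | e4 | h
        · exact Or.inl (Or.inr (lt4 e1 e2 e3 h))
        · exact Or.inl (Or.inl (ext4 e1 e2 e3 e4))
        · exact Or.inr (Or.inr (lt4 e1.symm e2.symm e3.symm h))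
      · exact Or.inr (Or.inr (lt3 e1.symm e2.symm h))
    · exact Or.inr (Or.inr (lt2 e1.symm h))
  · exact Or.inr (Or.inr (lt1 h))

lemma leWLW_antisymm {a b : IVIFN} (h1 : leWLW a b) (h2 : leWLW b a) : a = b := by
  have e1 : Sf a = Sf b := le_antisymm (le_S h1) (le_S h2)
  have e2 : Hf a = Hf b := le_antisymm (le_H h1 e1) (le_H h2 e1.symm)
  have e3 : Tf a = Tf b := le_antisymm (le_T h1 e1 e2) (le_T h2 e1.symm e2.symm)
  have e4 : Gf a = Gf b := le_antisymm (le_G h1 e1 e2 e3) (le_G h2 e1.symm e2.symm e3.symm)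
  exact ext4 e1 e2 e3 e4
lemma bdd_img {f : IVIFN → ℝ} {c : ℝ} (hc : ∀ a, f a ≤ c) (Ω : Set IVIFN) :
    BddAbove (f '' Ω) := ⟨c, by rintro x ⟨a, -, rfl⟩; exact hc a⟩

/-- lex-min of the slice {S = s, H = h, T = t}. -/
lemma lexmin3 (s h t : ℝ) (hts : t ≤ s + h) (hst : s - h ≤ t) (hth : t ≤ 2 - 2*h)
    (hht : 2*h - 2 ≤ t) (hsh : -s ≤ h) (hsh2 : s ≤ h) :
    ∃ u : IVIFN, Sf u = s ∧ Hf u = h ∧ Tf u = t ∧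
      ∀ v : IVIFN, Sf v = s → Hf v = h → Tf v = t → leWLW u v := by
  have hg1 : t ≤ max t (-t) := le_max_left _ _
  have hg2 : -t ≤ max t (-t) := le_max_right _ _
  have hg3 : t + max t (-t) ≤ 2*(s+h) := by
    rcases le_total t 0 with h0 | h0
    · rw [max_eq_right (by linarith)]; linarith
    · rw [max_eq_left (by linarith)]; linarith
  have hg4 : max t (-t) - t ≤ 2*(h-s) := by
    rcases le_total t 0 with h0 | h0
    · rw [max_eq_right (by linarith)]; linarith
    · rw [max_eq_left (by linarith)]; linarith
  have hg5 : 2*h + max t (-t) ≤ 2 := by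
    rcases le_total t 0 with h0 | h0
    · rw [max_eq_right (by linarith)]; linarith
    · rw [max_eq_left (by linarith)]; linarith
  refine ⟨mk4 s h t (max t (-t)) hg1 hg2 hg3 hg4 hg5, mk4_S, mk4_H, mk4_T, ?_⟩
  intro v hv1 hv2 hv3
  have hGv : max t (-t) ≤ Gf v := by
    refine max_le ?_ ?_
    · rw [← hv3]; exact T_le_G v
    · rw [← hv3]; exact negT_le_G v
  rcases lt_or_eq_of_le hGv with hlt | heq
  · exact Or.inr (lt4 (by simp [hv1]) (by simp [hv2]) (by simp [hv3]) (by simpa using hlt))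
  · exact Or.inl (ext4 (by simp [hv1]) (by simp [hv2]) (by simp [hv3]) (by simp [heq]))

/-- lex-min of the slice {S = s, H = h}. -/
lemma lexmin2 (s h : ℝ) (hsh : -s ≤ h) (hsh2 : s ≤ h) (hh1 : h ≤ 1) :
    ∃ u : IVIFN, Sf u = s ∧ Hf u = h ∧
      ∀ v : IVIFN, Sf v = s → Hf v = h → leWLW u v := by
  set t : ℝ := max (s - h) (2*h - 2) with hdef
  have hts : t ≤ s + h := by
    refine max_le (by linarith) (by linarith)
  have hst : s - h ≤ t := le_max_left _ _
  have hth : t ≤ 2 - 2*h := max_le (by linarith) (by linarith)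
  have hht : 2*h - 2 ≤ t := le_max_right _ _
  obtain ⟨u, hu1, hu2, hu3, hu4⟩ := lexmin3 s h t hts hst hth hht hsh hsh2
  refine ⟨u, hu1, hu2, ?_⟩
  intro v hv1 hv2
  have hTv : t ≤ Tf v := by
    refine max_le ?_ ?_
    · rw [← hv1, ← hv2]; exact SH_le_T v
    · have := negT_le_2H v; rw [hv2] at this; linarith
  rcases lt_or_eq_of_le hTv with hlt | heq
  · exact Or.inr (lt3 (hu1.trans hv1.symm) (hu2.trans hv2.symm) (by rw [hu3]; exact hlt))
  · exact hu4 v hv1 hv2 heq.symm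
lemma sup_exists (Ω : Set IVIFN) (hne : Ω.Nonempty) :
    ∃ u : IVIFN, (∀ a ∈ Ω, leWLW a u) ∧ ∀ v : IVIFN, (∀ a ∈ Ω, leWLW a v) → leWLW u v := by
  classical
  obtain ⟨a0, ha0⟩ := hne
  set s := sSup (Sf '' Ω) with hsdef
  have hSle : ∀ a ∈ Ω, Sf a ≤ s := fun a ha => le_csSup (bdd_img S_le_one Ω) ⟨a, ha, rfl⟩
  have hSlub : ∀ c, (∀ a ∈ Ω, Sf a ≤ c) → s ≤ c := fun c hc =>
    csSup_le ⟨_, a0, ha0, rfl⟩ (by rintro x ⟨a, ha, rfl⟩; exact hc a ha)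
  have hs1 : s ≤ 1 := hSlub 1 fun a _ => S_le_one a
  have hs2 : -1 ≤ s := le_trans (neg_one_le_S a0) (hSle a0 ha0)
  by_cases hA : ∃ a ∈ Ω, Sf a = s
  case neg =>
    obtain ⟨u, hu1, hu2, hu3⟩ := lexmin2 s (max s (-s)) (le_max_right _ _) (le_max_left _ _)
      (max_le hs1 (by linarith))
    refine ⟨u, ?_, ?_⟩
    · intro a ha
      have h1 : Sf a < s := lt_of_le_of_ne (hSle a ha) (fun hh => hA ⟨a, ha, hh⟩)
      exact Or.inr (lt1 (by rw [hu1]; exact h1))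
    · intro v hv
      have hsv : s ≤ Sf v := hSlub _ (fun a ha => le_S (hv a ha))
      rcases lt_or_eq_of_le hsv with h1 | h1
      · exact Or.inr (lt1 (by rw [hu1]; exact h1))
      · have hHv : max s (-s) ≤ Hf v :=
          max_le (by rw [h1]; exact S_le_H v) (by rw [h1]; exact negS_le_H v)
        rcases lt_or_eq_of_le hHv with h2 | h2
        · exact Or.inr (lt2 (hu1.trans h1) (by rw [hu2]; exact h2))
        · exact hu3 v h1.symm h2.symm
  case pos =>
  obtain ⟨a1, ha1, hsa1⟩ := hA
  set Ω1 : Set IVIFN := {a ∈ Ω | Sf a = s} with hΩ1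
  have ha1' : a1 ∈ Ω1 := ⟨ha1, hsa1⟩
  set h := sSup (Hf '' Ω1) with hhdef
  have hHle : ∀ a ∈ Ω1, Hf a ≤ h := fun a ha => le_csSup (bdd_img H_le_one Ω1) ⟨a, ha, rfl⟩
  have hHlub : ∀ c, (∀ a ∈ Ω1, Hf a ≤ c) → h ≤ c := fun c hc =>
    csSup_le ⟨_, a1, ha1', rfl⟩ (by rintro x ⟨a, ha, rfl⟩; exact hc a ha)
  have hh1 : h ≤ 1 := hHlub 1 fun a _ => H_le_one a
  have hsh : s ≤ h := by rw [← hsa1]; exact le_trans (S_le_H a1) (hHle a1 ha1')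
  have hsh' : -s ≤ h := by
    rw [← hsa1]; exact le_trans (negS_le_H a1) (hHle a1 ha1')
  by_cases hB : ∃ a ∈ Ω1, Hf a = h
  case neg =>
    obtain ⟨u, hu1, hu2, hu3⟩ := lexmin2 s h hsh' hsh hh1
    refine ⟨u, ?_, ?_⟩
    · intro a ha
      rcases lt_or_eq_of_le (hSle a ha) with h1 | h1
      · exact Or.inr (lt1 (by rw [hu1]; exact h1))
      · have haΩ1 : a ∈ Ω1 := ⟨ha, h1⟩
        have h2 : Hf a < h := lt_of_le_of_ne (hHle a haΩ1) fun hh => hB ⟨a, haΩ1, hh⟩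
        exact Or.inr (lt2 (h1.trans hu1.symm) (by rw [hu2]; exact h2))
    · intro v hv
      have hsv : s ≤ Sf v := by rw [← hsa1]; exact le_S (hv a1 ha1)
      rcases lt_or_eq_of_le hsv with h1 | h1
      · exact Or.inr (lt1 (by rw [hu1]; exact h1))
      · have hHv : h ≤ Hf v := hHlub _ (fun a ha => le_H (hv a ha.1) (ha.2.trans h1))
        rcases lt_or_eq_of_le hHv with h2 | h2
        · exact Or.inr (lt2 (hu1.trans h1) (by rw [hu2]; exact h2))
        · exact hu3 v h1.symm h2.symm
  case pos =>
  obtain ⟨a2, ha2', hha2⟩ := hB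
  have ha2 : a2 ∈ Ω := ha2'.1
  have hsa2 : Sf a2 = s := ha2'.2
  set Ω2 : Set IVIFN := {a ∈ Ω1 | Hf a = h} with hΩ2
  have ha2'' : a2 ∈ Ω2 := ⟨ha2', hha2⟩
  set t := sSup (Tf '' Ω2) with htdef
  have hTle : ∀ a ∈ Ω2, Tf a ≤ t := fun a ha => le_csSup (bdd_img T_le_two Ω2) ⟨a, ha, rfl⟩
  have hTlub : ∀ c, (∀ a ∈ Ω2, Tf a ≤ c) → t ≤ c := fun c hc =>
    csSup_le ⟨_, a2, ha2'', rfl⟩ (by rintro x ⟨a, ha, rfl⟩; exact hc a ha)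
  have hts : t ≤ s + h := hTlub _ (fun a ha => by
    have h2 := T_le_SH a; rw [ha.1.2, ha.2] at h2; exact h2)
  have hst : s - h ≤ t := le_trans (by rw [← hsa2, ← hha2]; exact SH_le_T a2) (hTle a2 ha2'')
  have hth : t ≤ 2 - 2*h := hTlub _ (fun a ha => by
    have h2 := T_le_2H a; rw [ha.2] at h2; exact h2)
  have hht : 2*h - 2 ≤ t := le_trans (by
    have h2 := negT_le_2H a2; rw [hha2] at h2; linarith) (hTle a2 ha2'')
  by_cases hC : ∃ a ∈ Ω2, Tf a = t
  case neg =>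
    obtain ⟨u, hu1, hu2, hu3, hu4⟩ := lexmin3 s h t hts hst hth hht hsh' hsh
    refine ⟨u, ?_, ?_⟩
    · intro a ha
      rcases lt_or_eq_of_le (hSle a ha) with h1 | h1
      · exact Or.inr (lt1 (by rw [hu1]; exact h1))
      · have haΩ1 : a ∈ Ω1 := ⟨ha, h1⟩
        rcases lt_or_eq_of_le (hHle a haΩ1) with h2 | h2
        · exact Or.inr (lt2 (h1.trans hu1.symm) (by rw [hu2]; exact h2))
        · have haΩ2 : a ∈ Ω2 := ⟨haΩ1, h2⟩
          have h3 : Tf a < t := lt_of_le_of_ne (hTle a haΩ2) fun hh => hC ⟨a, haΩ2, hh⟩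
          exact Or.inr (lt3 (h1.trans hu1.symm) (h2.trans hu2.symm) (by rw [hu3]; exact h3))
    · intro v hv
      have hsv : s ≤ Sf v := by rw [← hsa1]; exact le_S (hv a1 ha1)
      rcases lt_or_eq_of_le hsv with h1 | h1
      · exact Or.inr (lt1 (by rw [hu1]; exact h1))
      · have hHv : h ≤ Hf v := by rw [← hha2]; exact le_H (hv a2 ha2) (hsa2.trans h1)
        rcases lt_or_eq_of_le hHv with h2 | h2
        · exact Or.inr (lt2 (hu1.trans h1) (by rw [hu2]; exact h2))
        · have hTv : t ≤ Tf v := hTlub _ (fun a ha =>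
            le_T (hv a ha.1.1) (ha.1.2.trans h1) (ha.2.trans h2))
          rcases lt_or_eq_of_le hTv with h3 | h3
          · exact Or.inr (lt3 (hu1.trans h1) (hu2.trans h2) (by rw [hu3]; exact h3))
          · exact hu4 v h1.symm h2.symm h3.symm
  case pos =>
  obtain ⟨a3, ha3', hta3⟩ := hC
  set Ω3 : Set IVIFN := {a ∈ Ω2 | Tf a = t} with hΩ3
  have ha3'' : a3 ∈ Ω3 := ⟨ha3', hta3⟩
  set g := sSup (Gf '' Ω3) with hgdef
  have hGle : ∀ a ∈ Ω3, Gf a ≤ g := fun a ha => le_csSup (bdd_img G_le_two Ω3) ⟨a, ha, rfl⟩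
  have hGlub : ∀ c, (∀ a ∈ Ω3, Gf a ≤ c) → g ≤ c := fun c hc =>
    csSup_le ⟨_, a3, ha3'', rfl⟩ (by rintro x ⟨a, ha, rfl⟩; exact hc a ha)
  have hg1 : t ≤ g := le_trans (by rw [← hta3]; exact T_le_G a3) (hGle a3 ha3'')
  have hg2 : -t ≤ g := le_trans (by rw [← hta3]; exact negT_le_G a3) (hGle a3 ha3'')
  have hg3 : t + g ≤ 2*(s+h) := by
    have h' := hGlub (2*(s+h) - t) (fun a ha => by
      have h2 := TG_le a; rw [ha.1.1.2, ha.1.2, ha.2] at h2; linarith)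
    linarith
  have hg4 : g - t ≤ 2*(h-s) := by
    have h' := hGlub (2*(h-s) + t) (fun a ha => by
      have h2 := GT_le a; rw [ha.1.1.2, ha.1.2, ha.2] at h2; linarith)
    linarith
  have hg5 : 2*h + g ≤ 2 := by
    have h' := hGlub (2 - 2*h) (fun a ha => by
      have h2 := HG_le a; rw [ha.1.2] at h2; linarith)
    linarith
  refine ⟨mk4 s h t g hg1 hg2 hg3 hg4 hg5, ?_, ?_⟩
  · intro a ha
    rcases lt_or_eq_of_le (hSle a ha) with h1 | h1
    · exact Or.inr (lt1 (by rw [mk4_S]; exact h1))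
    · have haΩ1 : a ∈ Ω1 := ⟨ha, h1⟩
      rcases lt_or_eq_of_le (hHle a haΩ1) with h2 | h2
      · exact Or.inr (lt2 (by rw [mk4_S]; exact h1) (by rw [mk4_H]; exact h2))
      · have haΩ2 : a ∈ Ω2 := ⟨haΩ1, h2⟩
        rcases lt_or_eq_of_le (hTle a haΩ2) with h3 | h3
        · exact Or.inr (lt3 (by rw [mk4_S]; exact h1) (by rw [mk4_H]; exact h2)
            (by rw [mk4_T]; exact h3))
        · have haΩ3 : a ∈ Ω3 := ⟨haΩ2, h3⟩
          rcases lt_or_eq_of_le (hGle a haΩ3) with h4 | h4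
          · exact Or.inr (lt4 (by rw [mk4_S]; exact h1) (by rw [mk4_H]; exact h2)
              (by rw [mk4_T]; exact h3) (by rw [mk4_G]; exact h4))
          · exact Or.inl (ext4 (by rw [mk4_S]; exact h1) (by rw [mk4_H]; exact h2)
              (by rw [mk4_T]; exact h3) (by rw [mk4_G]; exact h4))
  · intro v hv
    have hsv : s ≤ Sf v := by rw [← hsa1]; exact le_S (hv a1 ha1)
    rcases lt_or_eq_of_le hsv with h1 | h1
    · exact Or.inr (lt1 (by rw [mk4_S]; exact h1))
    · have hHv : h ≤ Hf v := by rw [← hha2]; exact le_H (hv a2 ha2) (hsa2.trans h1)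
      rcases lt_or_eq_of_le hHv with h2 | h2
      · exact Or.inr (lt2 (mk4_S.trans h1) (by rw [mk4_H]; exact h2))
      · have hTv : t ≤ Tf v := by
          rw [← hta3]
          exact le_T (hv a3 ha3'.1.1) (ha3'.1.2.trans h1) (ha3'.2.trans h2)
        rcases lt_or_eq_of_le hTv with h3 | h3
        · exact Or.inr (lt3 (mk4_S.trans h1) (mk4_H.trans h2) (by rw [mk4_T]; exact h3))
        · have hGv : g ≤ Gf v := hGlub _ (fun a ha =>
            le_G (hv a ha.1.1.1) (ha.1.1.2.trans h1) (ha.1.2.trans h2) (ha.2.trans h3))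
          rcases lt_or_eq_of_le hGv with h4 | h4
          · exact Or.inr (lt4 (mk4_S.trans h1) (mk4_H.trans h2) (mk4_T.trans h3)
              (by rw [mk4_G]; exact h4))
          · exact Or.inl (ext4 (mk4_S.trans h1) (mk4_H.trans h2) (mk4_T.trans h3)
              (mk4_G.trans h4))
noncomputable def bot0 : IVIFN :=
  ⟨0, 0, 1, 1, by norm_num, by norm_num, by norm_num, by norm_num, by norm_num, by norm_num,
    by norm_num⟩

noncomputable def top0 : IVIFN :=
  ⟨1, 1, 0, 0, by norm_num, by norm_num, by norm_num, by norm_num, by norm_num, by norm_num,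
    by norm_num⟩

lemma bot0_le (a : IVIFN) : leWLW bot0 a := by
  have hb : Sf bot0 = -1 := by norm_num [Sf, bot0]
  by_cases hh : Sf a = -1
  · refine Or.inl (IVIFN.ext' ?_ ?_ ?_ ?_) <;>
      (simp only [Sf] at hh; simp only [bot0];
       linarith [a.muL_nonneg, a.mu_le, a.nuL_nonneg, a.nu_le, a.nuR_le_one])
  · exact Or.inr (lt1 (by rw [hb]; exact lt_of_le_of_ne (neg_one_le_S a) (Ne.symm hh)))

lemma le_top0 (a : IVIFN) : leWLW a top0 := by
  have ht : Sf top0 = 1 := by norm_num [Sf, top0]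
  by_cases hh : Sf a = 1
  · refine Or.inl (IVIFN.ext' ?_ ?_ ?_ ?_) <;>
      (simp only [Sf] at hh; simp only [top0];
       linarith [a.muL_nonneg, a.mu_le, a.muR_le_one, a.nuL_nonneg, a.nu_le])
  · exact Or.inr (lt1 (by rw [ht]; exact lt_of_le_of_ne (S_le_one a) hh))
theorem WLW_complete_chain :
    (∀ a : IVIFN, leWLW a a) ∧
    (∀ a b : IVIFN, leWLW a b → leWLW b a → a = b) ∧
    (∀ a b c : IVIFN, leWLW a b → leWLW b c → leWLW a c) ∧
    (∀ a b : IVIFN, leWLW a b ∨ leWLW b a) ∧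
    (∃ bot : IVIFN, ∀ a : IVIFN, leWLW bot a) ∧
    (∃ top : IVIFN, ∀ a : IVIFN, leWLW a top) ∧
    (∀ Ω : Set IVIFN, Ω.Nonempty →
      (∃ u : IVIFN, (∀ a ∈ Ω, leWLW a u) ∧
        ∀ v : IVIFN, (∀ a ∈ Ω, leWLW a v) → leWLW u v) ∧
      (∃ l : IVIFN, (∀ a ∈ Ω, leWLW l a) ∧
        ∀ m : IVIFN, (∀ a ∈ Ω, leWLW m a) → leWLW m l)) := by
  refine ⟨fun a => Or.inl rfl, fun a b h1 h2 => leWLW_antisymm h1 h2,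
    fun a b c h1 h2 => leWLW_trans h1 h2, leWLW_total, ⟨bot0, bot0_le⟩, ⟨top0, le_top0⟩, ?_⟩
  intro Ω hne
  refine ⟨sup_exists Ω hne, ?_⟩
  obtain ⟨l, hl1, hl2⟩ := sup_exists {m | ∀ a ∈ Ω, leWLW m a} ⟨bot0, fun a _ => bot0_le a⟩
  exact ⟨l, fun a ha => hl2 a (fun m hm => hm a ha), fun m hm => hl1 m hm⟩
end
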